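/- arXiv:2601.05217 — 4 statements merged into one kernel-verified Lean document; each statement's English description precedes it below -/
import Mathlib

section
/- Let (Ω, F) be a measurable space and let (μ_α) be an increasing net of countably additive finite nonnegative measures on F with sup_α μ_α(Ω) < ∞. Then the set function μ defined by μ(A) = sup_α μ_α(A) is a countably additive finite nonnegative measure. -/
open MeasureTheory

lemma tsum_iSup_comm' {ι : Type*} [Preorder ι] [IsDirected ι (· ≤ ·)]
    (g : ι → ℕ → ENNReal) (hg : ∀ n, Monotone fun a => g a n) :
    ∑' n, ⨆ a, g a n = ⨆ a, ∑' n, g a n := by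
  rw [ENNReal.tsum_eq_iSup_sum]
  simp_rw [ENNReal.tsum_eq_iSup_sum]
  rw [iSup_comm]
  congr 1
  ext s
  exact ENNReal.finsetSum_iSup_of_monotone fun n => hg n

/-- The setwise supremum of a bounded increasing net of finite (countably additive)
nonnegative measures is again a finite countably additive measure. -/
theorem stmt3 {Ω : Type*} [MeasurableSpace Ω] {ι : Type*} [Preorder ι] [Nonempty ι]
    [IsDirected ι (· ≤ ·)] (μs : ι → Measure Ω)
    (hmono : ∀ a b : ι, a ≤ b → ∀ A : Set Ω, μs a A ≤ μs b A)
    (hbdd : (⨆ a, μs a Set.univ) < ⊤) :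
    ∃ μ : Measure Ω, (∀ A : Set Ω, MeasurableSet A → μ A = ⨆ a, μs a A) ∧
      μ Set.univ < ⊤ := by
  refine ⟨Measure.ofMeasurable (fun A _ => ⨆ a, μs a A) (by simp) ?_, fun A hA => ?_, ?_⟩
  · intro f hf hdisj
    calc ⨆ a, μs a (⋃ i, f i) = ⨆ a, ∑' n, μs a (f n) := by
          congr 1; ext a; exact measure_iUnion hdisj hf
      _ = ∑' n, ⨆ a, μs a (f n) :=
          (tsum_iSup_comm' (fun a n => μs a (f n)) (fun n a b hab => hmono a b hab (f n))).symm
  · exact Measure.ofMeasurable_apply A hA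
  · rw [Measure.ofMeasurable_apply _ MeasurableSet.univ]
    exact hbdd
end

section
/- Let d_TV be the total variation distance between probability measures and Φ the set of tests (measurable functions into [0,1]). Define the minimax risk R(P, Q) = inf_{φ ∈ Φ} [sup_{μ ∈ P} E_μ[φ] + sup_{ν ∈ Q} E_ν[1−φ]] for nonempty sets P, Q of probability measures. Then R(P, Q) ≥ 1 − d_TV(conv(P), conv(Q)), where the distance between sets is the infimum of pairwise distances and conv denotes the set of finite convex combinations. -/
open MeasureTheory
open scoped ENNReal

/-- Finite convex combinations of a set of measures. -/
def convHull {Ω : Type*} [MeasurableSpace Ω] (P : Set (Measure Ω)) : Set (Measure Ω) :=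
  {μ | ∃ (n : ℕ) (w : Fin n → ℝ≥0∞) (μs : Fin n → Measure Ω),
    (∀ i, μs i ∈ P) ∧ (∑ i, w i = 1) ∧ μ = ∑ i, w i • μs i}

/-- Total variation distance. -/
noncomputable def tvDist {Ω : Type*} [MeasurableSpace Ω] (μ ν : Measure Ω) : ℝ :=
  ⨆ A : {s : Set Ω // MeasurableSet s}, |(μ A.1).toReal - (ν A.1).toReal|

section Aux
open Set
variable {Ω : Type*} [MeasurableSpace Ω]

lemma aux_integrable {μ : Measure Ω} [IsProbabilityMeasure μ] {φ : Ω → ℝ}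
    (hm : Measurable φ) (hb : ∀ x, φ x ∈ Set.Icc (0:ℝ) 1) : Integrable φ μ := by
  refine (integrable_const (1:ℝ)).mono' hm.aestronglyMeasurable ?_
  exact Filter.Eventually.of_forall fun x => abs_le.mpr ⟨by linarith [(hb x).1], (hb x).2⟩

lemma aux_mem_convHull {P : Set (Measure Ω)} {μ : Measure Ω} (h : μ ∈ P) : μ ∈ convHull P :=
  ⟨1, fun _ => 1, fun _ => μ, fun _ => h, by simp, by simp⟩

lemma aux_convHull_prob {P : Set (Measure Ω)} (hP : ∀ μ ∈ P, IsProbabilityMeasure μ)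
    {μ : Measure Ω} (h : μ ∈ convHull P) : IsProbabilityMeasure μ := by
  obtain ⟨n, w, μs, hμs, hw, rfl⟩ := h
  constructor
  have h1 : ∀ i, (μs i) Set.univ = 1 := fun i => (hP _ (hμs i)).measure_univ
  simp [Measure.finset_sum_apply, Measure.smul_apply, h1, hw]

lemma aux_abs_le_tv {μ ν : Measure Ω} [IsProbabilityMeasure μ] [IsProbabilityMeasure ν]
    {A : Set Ω} (hA : MeasurableSet A) :
    |(μ A).toReal - (ν A).toReal| ≤ tvDist μ ν := by
  have hbdd : BddAbove (Set.range fun A : {s : Set Ω // MeasurableSet s} =>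
      |(μ A.1).toReal - (ν A.1).toReal|) := by
    refine ⟨2, ?_⟩
    rintro x ⟨B, rfl⟩
    have h1 : (μ B.1).toReal ≤ 1 := by
      simpa using ENNReal.toReal_mono (by simp) (prob_le_one (μ := μ) (s := B.1))
    have h2 : (ν B.1).toReal ≤ 1 := by
      simpa using ENNReal.toReal_mono (by simp) (prob_le_one (μ := ν) (s := B.1))
    have h3 : 0 ≤ (μ B.1).toReal := ENNReal.toReal_nonneg
    have h4 : 0 ≤ (ν B.1).toReal := ENNReal.toReal_nonneg
    rw [abs_le]; constructor <;> linarith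
  exact le_ciSup hbdd (⟨A, hA⟩ : {s : Set Ω // MeasurableSet s})

lemma aux_int_diff_le_tv {μ ν : Measure Ω} [IsProbabilityMeasure μ] [IsProbabilityMeasure ν]
    {φ : Ω → ℝ} (hm : Measurable φ) (hb : ∀ x, φ x ∈ Set.Icc (0:ℝ) 1) :
    (∫ x, φ x ∂ν) - ∫ x, φ x ∂μ ≤ tvDist μ ν := by
  have hnnμ : (0:Ω → ℝ) ≤ᵐ[μ] φ := Filter.Eventually.of_forall fun x => (hb x).1
  have hnnν : (0:Ω → ℝ) ≤ᵐ[ν] φ := Filter.Eventually.of_forall fun x => (hb x).1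
  have hbdμ : φ ≤ᵐ[μ] fun _ => (1:ℝ) := Filter.Eventually.of_forall fun x => (hb x).2
  have hbdν : φ ≤ᵐ[ν] fun _ => (1:ℝ) := Filter.Eventually.of_forall fun x => (hb x).2
  rw [(aux_integrable hm hb).integral_eq_integral_Ioc_meas_le hnnν hbdν,
      (aux_integrable hm hb).integral_eq_integral_Ioc_meas_le hnnμ hbdμ]
  have hintOn : ∀ (ρ : Measure Ω) [IsProbabilityMeasure ρ],
      IntegrableOn (fun t : ℝ => (ρ {a | t ≤ φ a}).toReal) (Ioc 0 1) := by
    intro ρ _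
    have hmono : Antitone fun t : ℝ => (ρ {a | t ≤ φ a}).toReal := fun s t hst =>
      ENNReal.toReal_mono (measure_ne_top ρ _) (measure_mono fun a ha => le_trans hst ha)
    refine Integrable.mono' (g := fun _ => (1:ℝ))
      (integrableOn_const_iff (C := (1:ℝ)) |>.mpr (Or.inr (by simp [Real.volume_Ioc])))
      hmono.measurable.aestronglyMeasurable ?_
    · refine Filter.Eventually.of_forall fun t => ?_
      rw [Real.norm_eq_abs, abs_of_nonneg ENNReal.toReal_nonneg]
      simpa using ENNReal.toReal_mono (by simp) (prob_le_one (μ := ρ) (s := {a | t ≤ φ a}))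
  simp only [measureReal_def]
  rw [← integral_sub (hintOn ν) (hintOn μ)]
  have hpt : ∀ t : ℝ, (ν {a | t ≤ φ a}).toReal - (μ {a | t ≤ φ a}).toReal ≤ tvDist μ ν := by
    intro t
    have hA : MeasurableSet {a | t ≤ φ a} := hm measurableSet_Ici
    calc (ν {a | t ≤ φ a}).toReal - (μ {a | t ≤ φ a}).toReal
        ≤ |(μ {a | t ≤ φ a}).toReal - (ν {a | t ≤ φ a}).toReal| := by
          rw [abs_sub_comm]; exact le_abs_self _
      _ ≤ tvDist μ ν := aux_abs_le_tv hA
  calc (∫ t in Ioc (0:ℝ) 1, ((ν {a | t ≤ φ a}).toReal - (μ {a | t ≤ φ a}).toReal))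
      ≤ ∫ _t in Ioc (0:ℝ) 1, tvDist μ ν := by
        exact integral_mono ((hintOn ν).sub (hintOn μ))
          (integrableOn_const_iff (C := tvDist μ ν) |>.mpr (Or.inr (by simp [Real.volume_Ioc])))
          fun t => hpt t
    _ = tvDist μ ν := by simp [Real.volume_Ioc]

lemma aux_int_le_one {μ : Measure Ω} [IsProbabilityMeasure μ] {φ : Ω → ℝ}
    (hm : Measurable φ) (hb : ∀ x, φ x ∈ Set.Icc (0:ℝ) 1) : ∫ x, φ x ∂μ ≤ 1 := by
  calc ∫ x, φ x ∂μ ≤ ∫ _x, (1:ℝ) ∂μ :=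
        integral_mono (aux_integrable hm hb) (integrable_const 1) fun x => (hb x).2
    _ = 1 := by simp

lemma aux_int_le_sup {P : Set (Measure Ω)} (hP : ∀ μ ∈ P, IsProbabilityMeasure μ)
    (hPne : P.Nonempty) {φ : Ω → ℝ} (hm : Measurable φ) (hb : ∀ x, φ x ∈ Set.Icc (0:ℝ) 1)
    {μ : Measure Ω} (hμ : μ ∈ convHull P) :
    ∫ x, φ x ∂μ ≤ ⨆ μ' : P, ∫ x, φ x ∂(μ' : Measure Ω) := by
  obtain ⟨n, w, μs, hμs, hw, rfl⟩ := hμ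
  haveI : ∀ i, IsProbabilityMeasure (μs i) := fun i => hP _ (hμs i)
  haveI : Nonempty ↥P := hPne.to_subtype
  have hwi : ∀ i, w i ≠ ∞ := fun i =>
    ne_top_of_le_ne_top ENNReal.one_ne_top
      (hw ▸ Finset.single_le_sum (fun j _ => (zero_le : 0 ≤ w j)) (Finset.mem_univ i))
  have hbdd : BddAbove (Set.range fun μ' : P => ∫ x, φ x ∂(μ' : Measure Ω)) := by
    refine ⟨1, ?_⟩
    rintro x ⟨⟨ρ, hρ⟩, rfl⟩
    haveI := hP ρ hρ
    exact aux_int_le_one hm hb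
  have hle : ∀ i, ∫ x, φ x ∂(μs i) ≤ ⨆ μ' : P, ∫ x, φ x ∂(μ' : Measure Ω) := fun i =>
    le_ciSup hbdd (⟨μs i, hμs i⟩ : P)
  rw [integral_finset_sum_measure (fun i _ => (aux_integrable hm hb).smul_measure (hwi i))]
  have hsum : ∑ i, (w i).toReal = 1 := by
    rw [← ENNReal.toReal_sum (fun i _ => hwi i), hw, ENNReal.toReal_one]
  calc ∑ i, ∫ x, φ x ∂((w i) • μs i)
      = ∑ i, (w i).toReal * ∫ x, φ x ∂(μs i) := by
        refine Finset.sum_congr rfl fun i _ => ?_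
        rw [integral_smul_measure]; rfl
    _ ≤ ∑ i, (w i).toReal * (⨆ μ' : P, ∫ x, φ x ∂(μ' : Measure Ω)) := by
        refine Finset.sum_le_sum fun i _ =>
          mul_le_mul_of_nonneg_left (hle i) ENNReal.toReal_nonneg
    _ = (⨆ μ' : P, ∫ x, φ x ∂(μ' : Measure Ω)) := by
        rw [← Finset.sum_mul, hsum, one_mul]

end Aux

/-- Weak duality: the minimax testing risk is at least
`1 − d_TV(conv(P), conv(Q))`. -/
theorem stmt11 {Ω : Type*} [MeasurableSpace Ω] (P Q : Set (Measure Ω))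
    (hP : ∀ μ ∈ P, IsProbabilityMeasure μ) (hQ : ∀ ν ∈ Q, IsProbabilityMeasure ν)
    (hPne : P.Nonempty) (hQne : Q.Nonempty) :
    (⨅ φ : {f : Ω → ℝ // Measurable f ∧ ∀ x, f x ∈ Set.Icc (0:ℝ) 1},
        ((⨆ μ : P, ∫ x, φ.1 x ∂(μ : Measure Ω)) +
          ⨆ ν : Q, ∫ x, (1 - φ.1 x) ∂(ν : Measure Ω)))
      ≥ 1 - ⨅ μ : convHull P, ⨅ ν : convHull Q, tvDist (μ : Measure Ω) (ν : Measure Ω) := by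
  haveI : Nonempty ↥(convHull P) := ⟨⟨hPne.choose, aux_mem_convHull hPne.choose_spec⟩⟩
  haveI : Nonempty ↥(convHull Q) := ⟨⟨hQne.choose, aux_mem_convHull hQne.choose_spec⟩⟩
  haveI : Nonempty {f : Ω → ℝ // Measurable f ∧ ∀ x, f x ∈ Set.Icc (0:ℝ) 1} :=
    ⟨⟨fun _ => 0, measurable_const, fun _ => ⟨le_refl 0, zero_le_one⟩⟩⟩
  refine le_ciInf fun φ => ?_
  obtain ⟨φ, hm, hb⟩ := φ
  rw [sub_le_comm]
  refine le_ciInf fun μ => le_ciInf fun ν => ?_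
  obtain ⟨μ, hμ⟩ := μ
  obtain ⟨ν, hν⟩ := ν
  haveI := aux_convHull_prob hP hμ
  haveI := aux_convHull_prob hQ hν
  rw [sub_le_comm]
  have hb' : ∀ x, (1 - φ x) ∈ Set.Icc (0:ℝ) 1 := fun x =>
    ⟨by linarith [(hb x).2], by linarith [(hb x).1]⟩
  have hm' : Measurable fun x => 1 - φ x := measurable_const.sub hm
  have h1 : ∫ x, φ x ∂μ ≤ ⨆ μ' : P, ∫ x, φ x ∂(μ' : Measure Ω) :=
    aux_int_le_sup hP hPne hm hb hμ
  have h2 : ∫ x, (1 - φ x) ∂ν ≤ ⨆ ν' : Q, ∫ x, (1 - φ x) ∂(ν' : Measure Ω) :=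
    aux_int_le_sup hQ hQne hm' hb' hν
  have h3 : ∫ x, (1 - φ x) ∂ν = 1 - ∫ x, φ x ∂ν := by
    rw [integral_sub (integrable_const 1) (aux_integrable hm hb)]
    simp
  have h4 : (∫ x, φ x ∂ν) - ∫ x, φ x ∂μ ≤ tvDist μ ν := aux_int_diff_le_tv hm hb
  linarith
end

section
/- Let Q = {δ₀} and P = {(1/2 − 1/n)δ₀ + (1/2 + 1/n)δ_n : n ∈ ℕ, n ≥ 2} be probability measures on ℝ (or ℕ). Then the infimum of d_TV(μ, δ₀) over μ ∈ conv(P) equals 1/2, but no countably additive probability measure in the total-variation closure of conv(P) achieves distance 1/2 from δ₀. -/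
open MeasureTheory
open scoped ENNReal

section Aux
variable {Ω : Type*} [MeasurableSpace Ω]

lemma tvDist_bddAbove (μ ν : Measure Ω) [IsFiniteMeasure μ] [IsFiniteMeasure ν] :
    BddAbove (Set.range fun A : {s : Set Ω // MeasurableSet s} =>
      |(μ A.1).toReal - (ν A.1).toReal|) := by
  refine ⟨(μ Set.univ).toReal + (ν Set.univ).toReal, ?_⟩
  rintro x ⟨A, rfl⟩
  have h1 : (μ A.1).toReal ≤ (μ Set.univ).toReal :=
    ENNReal.toReal_mono (measure_ne_top _ _) (measure_mono (Set.subset_univ _))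
  have h2 : (ν A.1).toReal ≤ (ν Set.univ).toReal :=
    ENNReal.toReal_mono (measure_ne_top _ _) (measure_mono (Set.subset_univ _))
  have h3 : (0:ℝ) ≤ (μ A.1).toReal := ENNReal.toReal_nonneg
  have h4 : (0:ℝ) ≤ (ν A.1).toReal := ENNReal.toReal_nonneg
  rw [abs_le]; constructor <;> nlinarith

lemma abs_le_tvDist (μ ν : Measure Ω) [IsFiniteMeasure μ] [IsFiniteMeasure ν]
    {A : Set Ω} (hA : MeasurableSet A) :
    |(μ A).toReal - (ν A).toReal| ≤ tvDist μ ν :=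
  le_ciSup (tvDist_bddAbove μ ν) ⟨A, hA⟩

lemma tvDist_nonneg (μ ν : Measure Ω) [IsFiniteMeasure μ] [IsFiniteMeasure ν] :
    0 ≤ tvDist μ ν := by
  have := abs_le_tvDist μ ν MeasurableSet.empty
  simpa using (abs_nonneg _).trans this

end Aux

noncomputable def mP (n : ℕ) : Measure ℝ :=
  ENNReal.ofReal (1/2 - 1/(n:ℝ)) • Measure.dirac (0:ℝ) +
    ENNReal.ofReal (1/2 + 1/(n:ℝ)) • Measure.dirac ((n:ℝ))

def Pdef : Set (Measure ℝ) :=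
  {μ | ∃ n : ℕ, 2 ≤ n ∧
    μ = ENNReal.ofReal (1/2 - 1/(n:ℝ)) • Measure.dirac (0:ℝ) +
        ENNReal.ofReal (1/2 + 1/(n:ℝ)) • Measure.dirac (n:ℝ)}

lemma mP_apply (n : ℕ) {A : Set ℝ} (hA : MeasurableSet A) :
    mP n A = ENNReal.ofReal (1/2 - 1/(n:ℝ)) * A.indicator 1 (0:ℝ) +
      ENNReal.ofReal (1/2 + 1/(n:ℝ)) * A.indicator 1 ((n:ℝ)) := by
  simp [mP, Measure.dirac_apply' _ hA]

lemma half_sub_nonneg {n : ℕ} (hn : 2 ≤ n) : (0:ℝ) ≤ 1/2 - 1/(n:ℝ) := by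
  have hn0 : (0:ℝ) < n := by positivity
  rw [sub_nonneg, div_le_div_iff₀ hn0 (by norm_num)]
  have : (2:ℝ) ≤ n := by exact_mod_cast hn
  linarith

lemma mP_zero {n : ℕ} (hn : 2 ≤ n) : mP n {0} = ENNReal.ofReal (1/2 - 1/(n:ℝ)) := by
  rw [mP_apply n (measurableSet_singleton 0)]
  have h : ((n:ℝ)) ∉ ({0} : Set ℝ) := by
    simp only [Set.mem_singleton_iff, Nat.cast_eq_zero]; omega
  simp [Set.indicator_of_mem, Set.indicator_of_notMem h]

lemma mP_zero_compl {n : ℕ} (hn : 2 ≤ n) :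
    mP n ({0}ᶜ) = ENNReal.ofReal (1/2 + 1/(n:ℝ)) := by
  rw [mP_apply n (measurableSet_singleton 0).compl]
  have h : ((n:ℝ)) ∈ ({0}ᶜ : Set ℝ) := by
    simp only [Set.mem_compl_iff, Set.mem_singleton_iff, Nat.cast_eq_zero]; omega
  simp [Set.indicator_of_mem h]

lemma mP_Ioi {n : ℕ} (hn : 2 ≤ n) (N : ℕ) :
    mP n (Set.Ioi (N:ℝ)) = if N < n then ENNReal.ofReal (1/2 + 1/(n:ℝ)) else 0 := by
  rw [mP_apply n measurableSet_Ioi]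
  have h0 : (0:ℝ) ∉ Set.Ioi (N:ℝ) := by simp
  rw [Set.indicator_of_notMem h0]
  by_cases h : N < n
  · have : ((n:ℝ)) ∈ Set.Ioi (N:ℝ) := by simpa using (Nat.cast_lt (α := ℝ)).mpr h
    simp [Set.indicator_of_mem this, h]
  · have : ((n:ℝ)) ∉ Set.Ioi (N:ℝ) := by
      simp only [Set.mem_Ioi, not_lt]
      exact_mod_cast Nat.le_of_not_lt h
    simp [Set.indicator_of_notMem this, h]

lemma mP_univ {n : ℕ} (hn : 2 ≤ n) : mP n Set.univ = 1 := by
  rw [mP_apply n MeasurableSet.univ]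
  simp only [Set.indicator_univ, Pi.one_apply, mul_one]
  rw [← ENNReal.ofReal_add (half_sub_nonneg hn) (by positivity)]
  norm_num

lemma mP_prob {n : ℕ} (hn : 2 ≤ n) : IsProbabilityMeasure (mP n) := ⟨mP_univ hn⟩

lemma mP_mem {n : ℕ} (hn : 2 ≤ n) : mP n ∈ convHull Pdef := by
  refine ⟨1, fun _ => 1, fun _ => mP n, fun _ => ⟨n, hn, rfl⟩, by simp, by simp⟩

lemma tv_mP_le {n : ℕ} (hn : 2 ≤ n) :
    tvDist (mP n) (Measure.dirac (0:ℝ)) ≤ 1/2 + 1/(n:ℝ) := by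
  have ha : (0:ℝ) ≤ 1/2 - 1/(n:ℝ) := half_sub_nonneg hn
  have hb : (0:ℝ) ≤ 1/2 + 1/(n:ℝ) := by positivity
  apply ciSup_le
  rintro ⟨A, hA⟩
  rw [mP_apply n hA, Measure.dirac_apply' _ hA]
  have h1n : (0:ℝ) ≤ 1/(n:ℝ) := by positivity
  by_cases h0 : (0:ℝ) ∈ A <;> by_cases hn' : ((n:ℝ)) ∈ A
  · simp only [Set.indicator_of_mem h0, Set.indicator_of_mem hn', Pi.one_apply, mul_one]
    rw [← ENNReal.ofReal_add ha hb, ENNReal.toReal_ofReal (by linarith), ENNReal.toReal_one]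
    rw [abs_le]; constructor <;> linarith
  · simp only [Set.indicator_of_mem h0, Set.indicator_of_notMem hn', Pi.one_apply,
      mul_one, mul_zero, add_zero]
    rw [ENNReal.toReal_ofReal ha, ENNReal.toReal_one]
    rw [abs_le]; constructor <;> linarith
  · simp only [Set.indicator_of_notMem h0, Set.indicator_of_mem hn', Pi.one_apply,
      mul_one, mul_zero, zero_add]
    rw [ENNReal.toReal_ofReal hb, ENNReal.toReal_zero]
    rw [abs_le]; constructor <;> linarith
  · simp only [Set.indicator_of_notMem h0, Set.indicator_of_notMem hn',
      mul_zero, add_zero, ENNReal.toReal_zero, sub_zero, abs_zero]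
    linarith

lemma comb_real {ν : Measure ℝ} (hν : ν ∈ convHull Pdef) :
    ∃ (k : ℕ) (v : Fin k → ℝ) (ns : Fin k → ℕ),
      (∀ i, 0 ≤ v i) ∧ (∀ i, 2 ≤ ns i) ∧ (∑ i, v i) = 1 ∧
      ν Set.univ = 1 ∧
      (ν {0}).toReal = ∑ i, v i * (1/2 - 1/(ns i:ℝ)) ∧
      (ν ({0}ᶜ)).toReal = ∑ i, v i * (1/2 + 1/(ns i:ℝ)) ∧
      ∀ N : ℕ, (ν (Set.Ioi (N:ℝ))).toReal =
        ∑ i, (if N < ns i then v i * (1/2 + 1/(ns i:ℝ)) else 0) := by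
  obtain ⟨k, w, μs, hmem, hw, hsum⟩ := hν
  choose ns hns heq using hmem
  have hsum' : ν = ∑ i, w i • mP (ns i) := by
    rw [hsum]; congr 1; funext i; rw [heq i]; rfl
  have hwle : ∀ i, w i ≠ ∞ := fun i =>
    ((hw ▸ Finset.single_le_sum (fun j _ => (zero_le : 0 ≤ w j)) (Finset.mem_univ i)).trans_lt
      ENNReal.one_lt_top).ne
  have hwsum : (∑ i, (w i).toReal) = 1 := by
    rw [← ENNReal.toReal_sum (fun i _ => hwle i), hw, ENNReal.toReal_one]
  have key : ∀ A : Set ℝ, MeasurableSet A →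
      (ν A).toReal = ∑ i, (w i).toReal * (mP (ns i) A).toReal := by
    intro A hA
    rw [hsum', Measure.finset_sum_apply]
    simp only [Measure.smul_apply, smul_eq_mul]
    rw [ENNReal.toReal_sum]
    · simp [ENNReal.toReal_mul]
    · intro i _
      haveI := mP_prob (hns i)
      exact ENNReal.mul_ne_top (hwle i) (measure_ne_top _ _)
  refine ⟨k, fun i => (w i).toReal, ns, fun i => ENNReal.toReal_nonneg, hns, hwsum, ?_, ?_, ?_, ?_⟩
  · rw [hsum', Measure.finset_sum_apply]
    simp only [Measure.smul_apply, smul_eq_mul, mP_univ (hns _), mul_one]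
    exact hw
  · rw [key _ (measurableSet_singleton 0)]
    refine Finset.sum_congr rfl fun i _ => ?_
    rw [mP_zero (hns i), ENNReal.toReal_ofReal (half_sub_nonneg (hns i))]
  · rw [key _ (measurableSet_singleton 0).compl]
    refine Finset.sum_congr rfl fun i _ => ?_
    rw [mP_zero_compl (hns i), ENNReal.toReal_ofReal (by positivity)]
  · intro N
    rw [key _ measurableSet_Ioi]
    refine Finset.sum_congr rfl fun i _ => ?_
    rw [mP_Ioi (hns i) N]
    by_cases h : N < ns i
    · rw [if_pos h, if_pos h, ENNReal.toReal_ofReal (by positivity)]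
    · rw [if_neg h, if_neg h, ENNReal.toReal_zero, mul_zero]

lemma convHull_prob {ν : Measure ℝ} (hν : ν ∈ convHull Pdef) : IsProbabilityMeasure ν := by
  obtain ⟨k, v, ns, -, -, -, h, -⟩ := comb_real hν
  exact ⟨h⟩

lemma dirac_zero_compl : (Measure.dirac (0:ℝ)) ({0}ᶜ) = 0 := by
  rw [Measure.dirac_apply' _ (measurableSet_singleton 0).compl]
  simp

lemma tv_lower {ν : Measure ℝ} (hν : ν ∈ convHull Pdef) :
    1/2 ≤ tvDist ν (Measure.dirac (0:ℝ)) := by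
  haveI := convHull_prob hν
  obtain ⟨k, v, ns, hv0, hns, hv1, -, -, hc, -⟩ := comb_real hν
  have h := abs_le_tvDist ν (Measure.dirac (0:ℝ)) (measurableSet_singleton 0).compl
  rw [dirac_zero_compl] at h
  simp only [ENNReal.toReal_zero, sub_zero, abs_of_nonneg ENNReal.toReal_nonneg] at h
  refine le_trans ?_ h
  rw [hc]
  calc (1:ℝ)/2 = ∑ i, v i * (1/2) := by rw [← Finset.sum_mul, hv1, one_mul]
    _ ≤ ∑ i, v i * (1/2 + 1/(ns i:ℝ)) := by
        refine Finset.sum_le_sum fun i _ => ?_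
        have : (0:ℝ) ≤ 1/(ns i:ℝ) := by positivity
        nlinarith [hv0 i]

/-- With `P = {(1/2 − 1/n)δ₀ + (1/2 + 1/n)δ_n : n ≥ 2}`, the infimum total variation
distance from `conv(P)` to `δ₀` equals `1/2`, yet no countably additive probability
measure in the TV closure of `conv(P)` achieves distance `1/2` from `δ₀`. -/
theorem stmt16 :
    let P : Set (Measure ℝ) :=
      {μ | ∃ n : ℕ, 2 ≤ n ∧
        μ = ENNReal.ofReal (1/2 - 1/(n:ℝ)) • Measure.dirac (0:ℝ) +
            ENNReal.ofReal (1/2 + 1/(n:ℝ)) • Measure.dirac (n:ℝ)}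
    (⨅ μ : convHull P, tvDist (μ : Measure ℝ) (Measure.dirac (0:ℝ))) = 1/2 ∧
      ∀ μ : Measure ℝ, IsProbabilityMeasure μ →
        (∀ ε : ℝ, 0 < ε → ∃ ν ∈ convHull P, tvDist μ ν < ε) →
        tvDist μ (Measure.dirac (0:ℝ)) ≠ 1/2 := by
  show (⨅ μ : convHull Pdef, tvDist (μ : Measure ℝ) (Measure.dirac (0:ℝ))) = 1/2 ∧
      ∀ μ : Measure ℝ, IsProbabilityMeasure μ →
        (∀ ε : ℝ, 0 < ε → ∃ ν ∈ convHull Pdef, tvDist μ ν < ε) →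
        tvDist μ (Measure.dirac (0:ℝ)) ≠ 1/2
  constructor
  · -- Part 1 : the infimum equals 1/2
    haveI : Nonempty (convHull Pdef) := ⟨⟨mP 2, mP_mem le_rfl⟩⟩
    have hbdd : BddBelow (Set.range fun μ : convHull Pdef =>
        tvDist (μ : Measure ℝ) (Measure.dirac (0:ℝ))) := by
      refine ⟨0, ?_⟩
      rintro x ⟨⟨ν, hν⟩, rfl⟩
      haveI := convHull_prob hν
      exact tvDist_nonneg _ _
    refine le_antisymm ?_ (le_ciInf ?_)
    · refine le_of_forall_pos_le_add fun ε hε => ?_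
      obtain ⟨n, hn⟩ := exists_nat_gt (1/ε)
      have hm2 : 2 ≤ n + 2 := by omega
      have hmpos : (0:ℝ) < (n:ℝ) + 2 := by positivity
      have hcast : ((n + 2 : ℕ):ℝ) = (n:ℝ) + 2 := by push_cast; ring
      have hlt : 1/((n + 2 : ℕ):ℝ) ≤ ε := by
        rw [hcast, div_le_iff₀ hmpos]
        rw [div_lt_iff₀ hε] at hn
        nlinarith
      calc (⨅ μ : convHull Pdef, tvDist (μ : Measure ℝ) (Measure.dirac (0:ℝ)))
          ≤ tvDist (mP (n+2)) (Measure.dirac (0:ℝ)) := ciInf_le hbdd ⟨mP (n+2), mP_mem hm2⟩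
        _ ≤ 1/2 + 1/((n+2:ℕ):ℝ) := tv_mP_le hm2
        _ ≤ 1/2 + ε := by linarith
    · rintro ⟨ν, hν⟩
      exact tv_lower hν
  · -- Part 2 : no probability measure in the TV closure is at distance 1/2
    intro μ hμ happrox heq
    -- basic facts about μ at 0
    have hcompl : (μ {0}).toReal + (μ ({0}ᶜ)).toReal = 1 := by
      rw [← ENNReal.toReal_add (measure_ne_top _ _) (measure_ne_top _ _),
        measure_add_measure_compl (measurableSet_singleton 0), measure_univ,
        ENNReal.toReal_one]
    have h1 : (μ ({0}ᶜ)).toReal ≤ 1/2 := by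
      have h := abs_le_tvDist μ (Measure.dirac (0:ℝ)) (measurableSet_singleton 0).compl
      rw [dirac_zero_compl, heq] at h
      simp only [ENNReal.toReal_zero, sub_zero, abs_of_nonneg ENNReal.toReal_nonneg] at h
      exact h
    have h2 : 1/2 ≤ (μ {0}).toReal := by linarith
    -- find N with small tail
    have hanti : Antitone (fun N : ℕ => Set.Ioi ((N:ℝ))) := fun a b hab =>
      Set.Ioi_subset_Ioi (by exact_mod_cast hab)
    have hint : (⋂ N : ℕ, Set.Ioi ((N:ℝ))) = ∅ := by
      rw [Set.eq_empty_iff_forall_notMem]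
      intro x hx
      obtain ⟨N, hN⟩ := exists_nat_ge x
      exact absurd (Set.mem_iInter.mp hx N) (not_lt.mpr hN)
    have htend := tendsto_measure_iInter_atTop
      (μ := μ) (fun N : ℕ => measurableSet_Ioi.nullMeasurableSet) hanti
      ⟨0, measure_ne_top _ _⟩
    rw [hint, measure_empty] at htend
    have hev : ∀ᶠ N : ℕ in Filter.atTop, μ (Set.Ioi ((N:ℝ))) < ENNReal.ofReal (1/8) :=
      htend.eventually_lt_const (by simp [ENNReal.ofReal_pos])
    obtain ⟨N, hN⟩ := hev.exists
    have hμI : (μ (Set.Ioi ((N:ℝ)))).toReal < 1/8 := by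
      have := (ENNReal.toReal_lt_toReal (measure_ne_top _ _) ENNReal.ofReal_ne_top).mpr hN
      rwa [ENNReal.toReal_ofReal (by norm_num)] at this
    -- pick ν within ε of μ
    set ε : ℝ := 1/(8*((N:ℝ)+1)) with hεdef
    have hN1 : (0:ℝ) < (N:ℝ) + 1 := by positivity
    have hε : 0 < ε := by positivity
    have hε8 : ε ≤ 1/8 := by
      rw [hεdef, div_le_div_iff₀ (by positivity) (by norm_num)]
      linarith
    have hNε : (N:ℝ) * ε ≤ 1/8 := by
      rw [hεdef, mul_one_div, div_le_div_iff₀ (by positivity) (by norm_num)]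
      linarith
    obtain ⟨ν, hν, hdist⟩ := happrox ε hε
    haveI := convHull_prob hν
    obtain ⟨k, v, ns, hv0, hns, hv1, -, hz, -, hI⟩ := comb_real hν
    have hcl : ∀ {A : Set ℝ}, MeasurableSet A → |(μ A).toReal - (ν A).toReal| < ε :=
      fun hA => (abs_le_tvDist μ ν hA).trans_lt hdist
    -- S = sum of v i / ns i is small
    set S : ℝ := ∑ i, v i * (1/(ns i:ℝ)) with hSdef
    have hS0 : 0 ≤ S := Finset.sum_nonneg fun i _ => by
      have : (0:ℝ) ≤ 1/(ns i:ℝ) := by positivity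
      exact mul_nonneg (hv0 i) this
    have hz' : (ν {0}).toReal = 1/2 - S := by
      rw [hz, hSdef]
      rw [eq_sub_iff_add_eq, ← Finset.sum_add_distrib]
      calc ∑ i, (v i * (1/2 - 1/(ns i:ℝ)) + v i * (1/(ns i:ℝ)))
          = ∑ i, v i * (1/2) := by refine Finset.sum_congr rfl fun i _ => ?_; ring
        _ = 1/2 := by rw [← Finset.sum_mul, hv1, one_mul]
    have hSε : S < ε := by
      have h := hcl (measurableSet_singleton 0)
      rw [abs_lt] at h
      have := h.2
      rw [hz'] at h
      linarith [h.1, h.2]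
    -- T = mass on small indices
    set T : ℝ := ∑ i, (if ns i ≤ N then v i else 0) with hTdef
    have hTNS : T ≤ (N:ℝ) * S := by
      rw [hTdef, hSdef, Finset.mul_sum]
      refine Finset.sum_le_sum fun i _ => ?_
      by_cases h : ns i ≤ N
      · rw [if_pos h]
        have hni : (0:ℝ) < (ns i:ℝ) := by
          have := hns i; positivity
        rw [show (N:ℝ) * (v i * (1/(ns i:ℝ))) = v i * ((N:ℝ)/(ns i:ℝ)) by ring]
        refine le_mul_of_one_le_right (hv0 i) ?_
        rw [le_div_iff₀ hni, one_mul]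
        exact_mod_cast h
      · rw [if_neg h]
        exact mul_nonneg (Nat.cast_nonneg N) (mul_nonneg (hv0 i) (by positivity))
    -- lower bound for ν on the tail
    have hνI : (1 - T)/2 ≤ (ν (Set.Ioi ((N:ℝ)))).toReal := by
      rw [hI N]
      have e1 : (1 - T)/2 = ∑ i, (if N < ns i then v i * (1/2) else 0) := by
        have : ∀ i, (if N < ns i then v i else 0) = v i - (if ns i ≤ N then v i else 0) := by
          intro i
          by_cases h : ns i ≤ N
          · rw [if_neg (by omega), if_pos h]; ring
          · rw [if_pos (by omega), if_neg h]; ring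
        have e2 : ∑ i, (if N < ns i then v i else 0) = 1 - T := by
          simp only [this]
          rw [Finset.sum_sub_distrib, hv1, hTdef]
        rw [← e2, Finset.sum_div]
        refine Finset.sum_congr rfl fun i _ => ?_
        by_cases h : N < ns i
        · rw [if_pos h, if_pos h]; ring
        · rw [if_neg h, if_neg h]; ring
      rw [e1]
      refine Finset.sum_le_sum fun i _ => ?_
      by_cases h : N < ns i
      · rw [if_pos h, if_pos h]
        have : (0:ℝ) ≤ 1/(ns i:ℝ) := by positivity
        nlinarith [hv0 i]
      · rw [if_neg h, if_neg h]
    -- contradiction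
    have habs := hcl (measurableSet_Ioi (a := (N:ℝ)))
    rw [abs_lt] at habs
    have hNS : (N:ℝ) * S ≤ (N:ℝ) * ε :=
      mul_le_mul_of_nonneg_left hSε.le (Nat.cast_nonneg N)
    linarith [habs.1, habs.2]
end

section
/- Let ν be a probability measure and P a set of probability measures on (Ω, F). If for every test φ we have E_ν[φ] ≤ sup_{μ ∈ P} E_μ[φ], then ν belongs to the effective null P_eff, i.e., E_ν[Z] ≤ 1 for every e-variable Z for P. Conversely, if ν ∈ P_eff then E_ν[φ] ≤ sup_{μ ∈ P} E_μ[φ] for every test φ. -/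
open MeasureTheory
open scoped ENNReal

/-- A probability measure `ν` satisfies `E_ν[φ] ≤ sup_{μ ∈ P} E_μ[φ]` for every test `φ`
if and only if `ν` belongs to the effective null hypothesis `P_eff`, i.e.
`E_ν[Z] ≤ 1` for every e-variable `Z` for `P`. -/
theorem stmt19 {Ω : Type*} [MeasurableSpace Ω] (P : Set (Measure Ω))
    (hP : ∀ μ ∈ P, IsProbabilityMeasure μ)
    (ν : Measure Ω) [IsProbabilityMeasure ν] :
    (∀ φ : Ω → ℝ, Measurable φ → (∀ x, 0 ≤ φ x) → (∀ x, φ x ≤ 1) →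
        (∫ x, φ x ∂ν) ≤ ⨆ μ : P, ∫ x, φ x ∂(μ : Measure Ω)) ↔
      (∀ Z : Ω → ℝ≥0∞, Measurable Z → (∀ μ ∈ P, (∫⁻ x, Z x ∂μ) ≤ 1) →
        (∫⁻ x, Z x ∂ν) ≤ 1) := by
  constructor
  · intro h Z hZm hZ
    -- P is nonempty
    have hne : P.Nonempty := by
      by_contra hem
      rw [Set.not_nonempty_iff_eq_empty] at hem
      have h1 := h (fun _ => 1) measurable_const (fun _ => zero_le_one) (fun _ => le_rfl)
      have : IsEmpty ↥P := by rw [hem]; infer_instance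
      rw [Real.iSup_of_isEmpty] at h1
      simp [integral_const] at h1
      linarith
    haveI : Nonempty ↥P := hne.to_subtype
    -- truncation
    have hkey : ∀ n : ℕ, ∫⁻ x, min (Z x) n ∂ν ≤ 1 := by
      intro n
      rcases Nat.eq_zero_or_pos n with hn0 | hn
      · simp [hn0]
      have hn0 : (n : ℝ≥0∞) ≠ 0 := by exact_mod_cast hn.ne'
      have hntop : (n : ℝ≥0∞) ≠ ⊤ := ENNReal.natCast_ne_top n
      set f : Ω → ℝ≥0∞ := fun x => min (Z x) n / n with hf
      have hfm : Measurable f := (hZm.min measurable_const).div measurable_const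
      have hfle : ∀ x, f x ≤ 1 := by
        intro x
        rw [ENNReal.div_le_iff hn0 hntop, one_mul]
        exact min_le_right _ _
      set φ : Ω → ℝ := fun x => (f x).toReal with hφ
      have hφm : Measurable φ := hfm.ennreal_toReal
      have hφ0 : ∀ x, 0 ≤ φ x := fun x => ENNReal.toReal_nonneg
      have hφ1 : ∀ x, φ x ≤ 1 := by
        intro x
        have := ENNReal.toReal_mono ENNReal.one_ne_top (hfle x)
        simpa using this
      -- integral identity
      have hid : ∀ μ' : Measure Ω, IsProbabilityMeasure μ' →
          ∫ x, φ x ∂μ' = ((∫⁻ x, min (Z x) n ∂μ') / n).toReal := by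
        intro μ' hμ'
        have h1 : ∫ x, (f x).toReal ∂μ' = (∫⁻ x, f x ∂μ').toReal := by
          apply integral_toReal hfm.aemeasurable
          exact Filter.Eventually.of_forall fun x =>
            lt_of_le_of_lt (hfle x) ENNReal.one_lt_top
        rw [hφ, h1]
        congr 1
        simp only [hf, div_eq_mul_inv]
        rw [lintegral_mul_const _ (hZm.min measurable_const)]
      have hsup : (⨆ μ : P, ∫ x, φ x ∂(μ : Measure Ω)) ≤ 1 / (n : ℝ) := by
        apply ciSup_le
        intro ⟨μ, hμ⟩
        rw [hid μ (hP μ hμ)]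
        have hle : (∫⁻ x, min (Z x) n ∂μ) / n ≤ 1 / n := by
          apply ENNReal.div_le_div_right
          exact (lintegral_mono fun x => min_le_left _ _).trans (hZ μ hμ)
        calc ((∫⁻ x, min (Z x) n ∂μ) / n).toReal ≤ ((1 : ℝ≥0∞) / n).toReal :=
              ENNReal.toReal_mono (by simp [ENNReal.div_eq_top, hn0]) hle
          _ = 1 / (n : ℝ) := by
              rw [ENNReal.toReal_div]; simp
      have hν := (h φ hφm hφ0 hφ1).trans hsup
      rw [hid ν inferInstance] at hν
      have hAfin : (∫⁻ x, min (Z x) n ∂ν) / n ≠ ⊤ := by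
        have : ∫⁻ x, min (Z x) n ∂ν ≤ n := by
          calc ∫⁻ x, min (Z x) n ∂ν ≤ ∫⁻ _, (n : ℝ≥0∞) ∂ν :=
                lintegral_mono fun x => min_le_right _ _
            _ = n := by simp
        exact (ENNReal.div_lt_top (this.trans_lt (lt_of_le_of_ne le_top hntop)).ne hn0).ne
      have htr : ((1 : ℝ≥0∞) / n).toReal = 1 / (n : ℝ) := by
        rw [ENNReal.toReal_div]; simp
      rw [← htr] at hν
      have hANle : (∫⁻ x, min (Z x) n ∂ν) / n ≤ 1 / n :=
        (ENNReal.toReal_le_toReal hAfin (by simp [ENNReal.div_eq_top, hn0])).mp hν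
      rw [ENNReal.div_le_iff hn0 hntop] at hANle
      rwa [one_div, ENNReal.inv_mul_cancel hn0 hntop] at hANle
    -- pass to the limit
    have hZeq : ∀ x, Z x = ⨆ n : ℕ, min (Z x) n := by
      intro x
      apply le_antisymm
      · rcases eq_or_ne (Z x) ⊤ with h | h
        · rw [h]
          have heq : (⨆ n : ℕ, min (⊤ : ℝ≥0∞) n) = ⨆ n : ℕ, (n : ℝ≥0∞) :=
            iSup_congr fun n => min_eq_right le_top
          rw [heq, ENNReal.iSup_natCast]
        · obtain ⟨n, hn⟩ := ENNReal.exists_nat_gt h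
          exact le_iSup_of_le n (le_min le_rfl hn.le)
      · exact iSup_le fun n => min_le_left _ _
    calc ∫⁻ x, Z x ∂ν = ∫⁻ x, ⨆ n : ℕ, min (Z x) n ∂ν := by
          exact lintegral_congr fun x => hZeq x
      _ = ⨆ n : ℕ, ∫⁻ x, min (Z x) n ∂ν := by
          apply lintegral_iSup (fun n => hZm.min measurable_const)
          intro m k hmk x
          exact min_le_min le_rfl (by exact_mod_cast Nat.cast_le.mpr hmk)
      _ ≤ 1 := iSup_le hkey
  · intro H φ hφm hφ0 hφ1
    -- P nonempty
    have hne : P.Nonempty := by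
      by_contra hem
      rw [Set.not_nonempty_iff_eq_empty] at hem
      have h2 := H (fun _ => 2) measurable_const (by simp [hem])
      rw [lintegral_const] at h2
      simp at h2
    haveI : Nonempty ↥P := hne.to_subtype
    have hint : ∀ μ' : Measure Ω, IsProbabilityMeasure μ' → Integrable φ μ' := by
      intro μ' hμ'
      apply (integrable_const (1:ℝ)).mono' hφm.aestronglyMeasurable
      exact Filter.Eventually.of_forall fun x => by
        rw [Real.norm_eq_abs, abs_of_nonneg (hφ0 x)]; exact hφ1 x
    set s : ℝ := ⨆ μ : P, ∫ x, φ x ∂(μ : Measure Ω) with hs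
    have hbdd : BddAbove (Set.range fun μ : P => ∫ x, φ x ∂(μ : Measure Ω)) := by
      refine ⟨1, ?_⟩
      rintro y ⟨⟨μ, hμ⟩, rfl⟩
      haveI := hP μ hμ
      calc ∫ x, φ x ∂μ ≤ ∫ x, (1:ℝ) ∂μ :=
            integral_mono (hint μ (hP μ hμ)) (integrable_const 1) hφ1
        _ = 1 := by simp
    have hsle : ∀ μ ∈ P, ∫ x, φ x ∂μ ≤ s := by
      intro μ hμ
      exact le_ciSup hbdd ⟨μ, hμ⟩
    have hs0 : 0 ≤ s := by
      obtain ⟨μ, hμ⟩ := hne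
      exact (integral_nonneg hφ0).trans (hsle μ hμ)
    -- show for every ε > 0
    have hmain : ∀ ε : ℝ, 0 < ε → ∫ x, φ x ∂ν ≤ s + ε := by
      intro ε hε
      have hsε : 0 < s + ε := by linarith
      set Z : Ω → ℝ≥0∞ := fun x => ENNReal.ofReal (φ x / (s + ε)) with hZ
      have hZm : Measurable Z := (hφm.div_const _).ennreal_ofReal
      have hZint : ∀ μ' : Measure Ω, IsProbabilityMeasure μ' →
          ∫⁻ x, Z x ∂μ' = ENNReal.ofReal ((∫ x, φ x ∂μ') / (s + ε)) := by
        intro μ' hμ'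
        rw [← ofReal_integral_eq_lintegral_ofReal ((hint μ' hμ').div_const _)
            (Filter.Eventually.of_forall fun x => div_nonneg (hφ0 x) hsε.le)]
        rw [integral_div]
      have hZe : ∀ μ ∈ P, ∫⁻ x, Z x ∂μ ≤ 1 := by
        intro μ hμ
        rw [hZint μ (hP μ hμ)]
        rw [ENNReal.ofReal_le_one]
        rw [div_le_one hsε]
        linarith [hsle μ hμ]
      have := H Z hZm hZe
      rw [hZint ν inferInstance, ENNReal.ofReal_le_one, div_le_one hsε] at this
      exact this
    exact le_of_forall_pos_le_add hmain
end
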